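/- arXiv:2506.10485 — 5 statements merged into one kernel-verified Lean document; each statement's English description precedes it below -/
import Mathlib

section
/- Let ω₁, ω₂, ω₃ ∈ ℂ with |ω₁| ≤ 1, |ω₂| ≤ 1, |ω₃| ≤ 1, and let α₁, α₂, β ∈ ℂ. The 3×3 upper-triangular matrix T₃ with rows (ω₁, α₁, β), (0, ω₂, α₂), (0, 0, ω₃) is a contraction (i.e. ‖T₃‖ ≤ 1 for the Euclidean operator norm on ℂ³) if and only if either: (i) |ω₂| < 1, |αᵢ|² ≤ (1−|ωᵢ|²)(1−|ω_{i+1}|²) for i = 1,2, and |β(1−|ω₂|²) + α₁α₂ ω̄₂|² ≤ [(1−|ω₁|²)(1−|ω₂|²) − |α₁|²]·[(1−|ω₂|²)(1−|ω₃|²) − |α₂|²]; or (ii) |ω₂| = 1, α₁ = α₂ = 0, and |β|² ≤ (1−|ω₁|²)(1−|ω₃|²). -/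
open Complex Matrix

/-- The squared modulus of a complex number. -/
noncomputable def nsq (z : ℂ) : ℝ := ‖z‖ ^ 2

/-- The "defect" quantity `1 - |ω|²`. -/
noncomputable def d (ω : ℂ) : ℝ := 1 - ‖ω‖ ^ 2

/-- A square complex matrix is a contraction if its Euclidean operator norm is at most `1`. -/
noncomputable def IsContraction {n : ℕ} (T : Matrix (Fin n) (Fin n) ℂ) : Prop :=
  ‖Matrix.toEuclideanCLM (𝕜 := ℂ) T‖ ≤ 1

namespace Contraction3x3Aux

/-- Sufficiency for positivity of a 2x2 hermitian-type form. -/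
lemma herm2_suff (A c : ℝ) (K : ℂ) (hA : 0 ≤ A) (hc : 0 ≤ c)
    (hK : Complex.normSq K ≤ A * c) (y z : ℂ) :
    2 * (K * (starRingEnd ℂ) y * z).re ≤ A * Complex.normSq y + c * Complex.normSq z := by
  have h1 : (K * (starRingEnd ℂ) y * z).re ≤ ‖K‖ * ‖y‖ * ‖z‖ := by
    calc (K * (starRingEnd ℂ) y * z).re ≤ ‖K * (starRingEnd ℂ) y * z‖ :=
          Complex.re_le_norm _
      _ = ‖K‖ * ‖y‖ * ‖z‖ := by simp [_root_.map_mul]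
  have hy : Complex.normSq y = ‖y‖ ^ 2 := (Complex.sq_norm y).symm
  have hz : Complex.normSq z = ‖z‖ ^ 2 := (Complex.sq_norm z).symm
  have hKn : Complex.normSq K = ‖K‖ ^ 2 := (Complex.sq_norm K).symm
  set k := ‖K‖
  set Y := ‖y‖
  set Z := ‖z‖
  have hk0 : 0 ≤ k := norm_nonneg _
  have hY0 : 0 ≤ Y := norm_nonneg _
  have hZ0 : 0 ≤ Z := norm_nonneg _
  rw [hy, hz]
  have hK' : k ^ 2 ≤ A * c := by rw [← hKn]; exact hK
  have main : 2 * (k * Y * Z) ≤ A * Y ^ 2 + c * Z ^ 2 := by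
    have hsq : (2 * (k * Y * Z)) ^ 2 ≤ (A * Y ^ 2 + c * Z ^ 2) ^ 2 := by
      nlinarith [sq_nonneg (A * Y ^ 2 - c * Z ^ 2),
        mul_nonneg (sub_nonneg.2 hK') (sq_nonneg (Y * Z))]
    have h2 : 0 ≤ 2 * (k * Y * Z) := by positivity
    have h3 : 0 ≤ A * Y ^ 2 + c * Z ^ 2 := by positivity
    nlinarith [hsq, h2, h3]
  linarith

/-- Necessity: a nonnegative 2x2 hermitian-type form has nonnegative diagonal and
dominated off-diagonal entry. -/
lemma herm2_nec (A c : ℝ) (K : ℂ)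
    (h : ∀ y z : ℂ, 2 * (K * (starRingEnd ℂ) y * z).re
        ≤ A * Complex.normSq y + c * Complex.normSq z) :
    0 ≤ A ∧ 0 ≤ c ∧ Complex.normSq K ≤ A * c := by
  have hA : 0 ≤ A := by have := h 1 0; simpa using this
  have hc : 0 ≤ c := by have := h 0 1; simpa using this
  refine ⟨hA, hc, ?_⟩
  set k := Complex.normSq K with hk
  have hk0 : 0 ≤ k := Complex.normSq_nonneg K
  have key : ∀ t : ℝ, 2 * (k * t) ≤ A * k + c * t ^ 2 := by
    intro t
    have := h K (t : ℂ)
    have e1 : (K * (starRingEnd ℂ) K * (t : ℂ)).re = k * t := by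
      rw [Complex.mul_conj]
      simp [← Complex.ofReal_mul]
      exact Or.inl rfl
    have e2 : Complex.normSq (t : ℂ) = t ^ 2 := by
      simp [Complex.normSq_apply]; ring
    rw [e1, e2] at this
    linarith
  rcases eq_or_lt_of_le hc with hc0 | hcpos
  · have hk1 : k = 0 := by
      by_contra hne
      have hkpos : 0 < k := lt_of_le_of_ne hk0 (Ne.symm hne)
      have h1 := key ((A * k + 1) / (2 * k))
      rw [← hc0] at h1
      have h2k : (2 * k) ≠ 0 := by positivity
      have e3 : 2 * (k * ((A * k + 1) / (2 * k))) = A * k + 1 := by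
        field_simp
      rw [e3] at h1
      linarith
    rw [hk1, ← hc0]
    nlinarith [hA]
  · have h1 := key (k / c)
    have e : c * (k / c) ^ 2 = k ^ 2 / c := by field_simp
    rw [e] at h1
    have h2 : k ^ 2 ≤ A * c * k := by
      have h3 := mul_le_mul_of_nonneg_left h1 (le_of_lt hcpos)
      have e2 : c * (2 * (k * (k / c))) = 2 * k ^ 2 := by field_simp
      have e4 : c * (A * k + k ^ 2 / c) = c * A * k + k ^ 2 := by field_simp
      rw [e2, e4] at h3
      nlinarith [h3]
    rcases eq_or_lt_of_le hk0 with hk1 | hkpos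
    · rw [← hk1]; positivity
    · nlinarith [h2, hkpos]

/-- Expansion of the squared modulus of a 2-term combination. -/
lemma normSq_comb2 (a b u v : ℂ) :
    Complex.normSq (a * u + b * v) =
      Complex.normSq a * Complex.normSq u + Complex.normSq b * Complex.normSq v
        + 2 * ((starRingEnd ℂ) a * b * (starRingEnd ℂ) u * v).re := by
  simp only [Complex.normSq_apply, Complex.add_re, Complex.add_im, Complex.mul_re,
    Complex.mul_im, Complex.conj_re, Complex.conj_im]
  ring

/-- Generic Schur-complement identity at the first variable. -/
lemma schur_first (a b c : ℝ) (p q r x y z : ℂ) :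
    a * (a * Complex.normSq x + b * Complex.normSq y + c * Complex.normSq z
        + 2 * (p * (starRingEnd ℂ) x * y).re + 2 * (q * (starRingEnd ℂ) x * z).re
        + 2 * (r * (starRingEnd ℂ) y * z).re) =
      Complex.normSq ((a : ℂ) * x + p * y + q * z)
        + (a * b - Complex.normSq p) * Complex.normSq y
        + (a * c - Complex.normSq q) * Complex.normSq z
        + 2 * (((a : ℂ) * r - (starRingEnd ℂ) p * q) * (starRingEnd ℂ) y * z).re := by
  simp only [Complex.normSq_apply, Complex.add_re, Complex.add_im, Complex.sub_re,
    Complex.sub_im, Complex.mul_re, Complex.mul_im, Complex.conj_re, Complex.conj_im,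
    Complex.ofReal_re, Complex.ofReal_im]
  ring

/-- Generic Schur-complement identity at the middle variable, specialized at the optimal value. -/
lemma schur_mid (a b c : ℝ) (p q r x z : ℂ) :
    a * Complex.normSq ((b : ℂ) * x) + b * Complex.normSq (-((starRingEnd ℂ) p * x + r * z))
        + c * Complex.normSq ((b : ℂ) * z)
        + 2 * (p * (starRingEnd ℂ) ((b : ℂ) * x) * (-((starRingEnd ℂ) p * x + r * z))).re
        + 2 * (q * (starRingEnd ℂ) ((b : ℂ) * x) * ((b : ℂ) * z)).re
        + 2 * (r * (starRingEnd ℂ) (-((starRingEnd ℂ) p * x + r * z)) * ((b : ℂ) * z)).re =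
      b * ((a * b - Complex.normSq p) * Complex.normSq x
        + (c * b - Complex.normSq r) * Complex.normSq z
        - 2 * ((p * r - q * (b : ℂ)) * (starRingEnd ℂ) x * z).re) := by
  simp only [Complex.normSq_apply, Complex.add_re, Complex.add_im, Complex.sub_re,
    Complex.sub_im, Complex.neg_re, Complex.neg_im, Complex.mul_re, Complex.mul_im,
    Complex.conj_re, Complex.conj_im, Complex.ofReal_re, Complex.ofReal_im]
  ring

/-- The quadratic form of `1 - Tᴴ T` for the triangular matrix. -/
lemma Mform (ω₁ ω₂ ω₃ α₁ α₂ β x y z : ℂ) :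
    Complex.normSq x + Complex.normSq y + Complex.normSq z
      - Complex.normSq (ω₁ * x + α₁ * y + β * z)
      - Complex.normSq (ω₂ * y + α₂ * z) - Complex.normSq (ω₃ * z) =
    (1 - Complex.normSq ω₁) * Complex.normSq x
      + (1 - Complex.normSq ω₂ - Complex.normSq α₁) * Complex.normSq y
      + (1 - Complex.normSq ω₃ - Complex.normSq α₂ - Complex.normSq β) * Complex.normSq z
      + 2 * ((-((starRingEnd ℂ) ω₁ * α₁)) * (starRingEnd ℂ) x * y).re
      + 2 * ((-((starRingEnd ℂ) ω₁ * β)) * (starRingEnd ℂ) x * z).re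
      + 2 * ((-((starRingEnd ℂ) α₁ * β + (starRingEnd ℂ) ω₂ * α₂))
          * (starRingEnd ℂ) y * z).re := by
  simp only [Complex.normSq_apply, Complex.add_re, Complex.add_im, Complex.neg_re,
    Complex.neg_im, Complex.mul_re, Complex.mul_im, Complex.conj_re, Complex.conj_im]
  ring

/-- The determinant-style identity `d₂ · (c·b - |K₀|²) = b·B - |γ|²`. -/
lemma IC (ω₂ ω₃ α₁ α₂ β : ℂ) :
    (1 - Complex.normSq ω₂) *
        ((1 - Complex.normSq ω₃ - Complex.normSq α₂ - Complex.normSq β)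
            * (1 - Complex.normSq ω₂ - Complex.normSq α₁)
          - Complex.normSq ((starRingEnd ℂ) α₁ * β + (starRingEnd ℂ) ω₂ * α₂)) =
      (1 - Complex.normSq ω₂ - Complex.normSq α₁) *
          ((1 - Complex.normSq ω₂) * (1 - Complex.normSq ω₃) - Complex.normSq α₂)
        - Complex.normSq (β * ((1 - Complex.normSq ω₂ : ℝ) : ℂ)
            + α₁ * α₂ * (starRingEnd ℂ) ω₂) := by
  simp only [Complex.normSq_apply, Complex.add_re, Complex.add_im, Complex.mul_re,
    Complex.mul_im, Complex.conj_re, Complex.conj_im, Complex.ofReal_re, Complex.ofReal_im,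
    Complex.sub_re, Complex.sub_im, Complex.one_re, Complex.one_im]
  ring

/-- The identity `d₂ · (A·c₁ - |r₁|²) = d₁ · (A·B - |γ|²)`. -/
lemma Irc (ω₁ ω₂ ω₃ α₁ α₂ β : ℂ) :
    (1 - Complex.normSq ω₂) *
        (((1 - Complex.normSq ω₁) * (1 - Complex.normSq ω₂) - Complex.normSq α₁) *
            ((1 - Complex.normSq ω₁) * (1 - Complex.normSq ω₃)
              - (1 - Complex.normSq ω₁) * Complex.normSq α₂ - Complex.normSq β)
          - Complex.normSq ((starRingEnd ℂ) α₁ * β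
              + ((1 - Complex.normSq ω₁ : ℝ) : ℂ) * (starRingEnd ℂ) ω₂ * α₂)) =
      (1 - Complex.normSq ω₁) *
        (((1 - Complex.normSq ω₁) * (1 - Complex.normSq ω₂) - Complex.normSq α₁) *
            ((1 - Complex.normSq ω₂) * (1 - Complex.normSq ω₃) - Complex.normSq α₂)
          - Complex.normSq (β * ((1 - Complex.normSq ω₂ : ℝ) : ℂ)
              + α₁ * α₂ * (starRingEnd ℂ) ω₂)) := by
  simp only [Complex.normSq_apply, Complex.add_re, Complex.add_im, Complex.mul_re,
    Complex.mul_im, Complex.conj_re, Complex.conj_im, Complex.ofReal_re, Complex.ofReal_im,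
    Complex.sub_re, Complex.sub_im, Complex.one_re, Complex.one_im]
  ring

/-- Reduction of the contraction property to a scalar inequality. -/
lemma contraction_iff_forall (ω₁ ω₂ ω₃ α₁ α₂ β : ℂ) :
    IsContraction !![ω₁, α₁, β; 0, ω₂, α₂; 0, 0, ω₃] ↔
      ∀ x y z : ℂ,
        Complex.normSq (ω₁ * x + α₁ * y + β * z) + Complex.normSq (ω₂ * y + α₂ * z)
            + Complex.normSq (ω₃ * z)
          ≤ Complex.normSq x + Complex.normSq y + Complex.normSq z := by
  set T : Matrix (Fin 3) (Fin 3) ℂ := !![ω₁, α₁, β; 0, ω₂, α₂; 0, 0, ω₃] with hT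
  have hmv : ∀ w : Fin 3 → ℂ, T.mulVec w =
      ![ω₁ * w 0 + α₁ * w 1 + β * w 2, ω₂ * w 1 + α₂ * w 2, ω₃ * w 2] := by
    intro w
    funext i
    fin_cases i <;>
      simp [hT, Matrix.mulVec, dotProduct, Fin.sum_univ_three, Matrix.vecHead, Matrix.vecTail] <;> ring
  have hnorm : ∀ w : Fin 3 → ℂ,
      ‖(WithLp.equiv 2 (Fin 3 → ℂ)).symm w‖ ^ 2 =
        Complex.normSq (w 0) + Complex.normSq (w 1) + Complex.normSq (w 2) := by
    intro w
    rw [EuclideanSpace.norm_eq]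
    rw [Real.sq_sqrt (by positivity)]
    simp [Fin.sum_univ_three, Complex.sq_norm]
  have happly : ∀ w : Fin 3 → ℂ,
      (Matrix.toEuclideanCLM (𝕜 := ℂ) T) ((WithLp.equiv 2 (Fin 3 → ℂ)).symm w) =
        (WithLp.equiv 2 (Fin 3 → ℂ)).symm (T.mulVec w) := by
    intro w
    exact Matrix.toEuclideanCLM_toLp T w
  constructor
  · intro h x y z
    have hv := ContinuousLinearMap.le_opNorm (Matrix.toEuclideanCLM (𝕜 := ℂ) T)
      ((WithLp.equiv 2 (Fin 3 → ℂ)).symm ![x, y, z])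
    have hle : ‖(Matrix.toEuclideanCLM (𝕜 := ℂ) T)
          ((WithLp.equiv 2 (Fin 3 → ℂ)).symm ![x, y, z])‖
        ≤ ‖(WithLp.equiv 2 (Fin 3 → ℂ)).symm ![x, y, z]‖ := by
      calc ‖(Matrix.toEuclideanCLM (𝕜 := ℂ) T) ((WithLp.equiv 2 (Fin 3 → ℂ)).symm ![x, y, z])‖
          ≤ ‖Matrix.toEuclideanCLM (𝕜 := ℂ) T‖
              * ‖(WithLp.equiv 2 (Fin 3 → ℂ)).symm ![x, y, z]‖ := hv
        _ ≤ 1 * ‖(WithLp.equiv 2 (Fin 3 → ℂ)).symm ![x, y, z]‖ :=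
            mul_le_mul_of_nonneg_right h (norm_nonneg _)
        _ = _ := one_mul _
    have hsq := mul_self_le_mul_self (norm_nonneg _) hle
    rw [← pow_two, ← pow_two] at hsq
    rw [happly, hnorm, hnorm, hmv] at hsq
    simpa using hsq
  · intro h
    apply ContinuousLinearMap.opNorm_le_bound _ zero_le_one
    intro v
    rw [one_mul]
    have hv : v = (WithLp.equiv 2 (Fin 3 → ℂ)).symm ![v 0, v 1, v 2] := by
      ext i
      fin_cases i <;> rfl
    have h2 : ‖(Matrix.toEuclideanCLM (𝕜 := ℂ) T) v‖ ^ 2 ≤ ‖v‖ ^ 2 := by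
      conv_lhs => rw [hv]
      conv_rhs => rw [hv]
      rw [happly, hnorm, hnorm, hmv]
      simpa using h (v 0) (v 1) (v 2)
    exact le_of_sq_le_sq h2 (norm_nonneg _)

end Contraction3x3Aux

set_option maxHeartbeats 1600000 in
theorem contraction_criterion_3x3
    (ω₁ ω₂ ω₃ α₁ α₂ β : ℂ)
    (hω₁ : ‖ω₁‖ ≤ 1) (hω₂ : ‖ω₂‖ ≤ 1) (hω₃ : ‖ω₃‖ ≤ 1) :
    IsContraction !![ω₁, α₁, β; 0, ω₂, α₂; 0, 0, ω₃] ↔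
      ((‖ω₂‖ < 1 ∧
        nsq α₁ ≤ d ω₁ * d ω₂ ∧
        nsq α₂ ≤ d ω₂ * d ω₃ ∧
        nsq (β * (d ω₂ : ℂ) + α₁ * α₂ * (starRingEnd ℂ) ω₂) ≤
          (d ω₁ * d ω₂ - nsq α₁) * (d ω₂ * d ω₃ - nsq α₂))
      ∨ (‖ω₂‖ = 1 ∧ α₁ = 0 ∧ α₂ = 0 ∧ nsq β ≤ d ω₁ * d ω₃)) := by
  open Contraction3x3Aux in
  rw [Contraction3x3Aux.contraction_iff_forall]
  simp only [nsq, d, Complex.sq_norm]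
  have hn₁ : Complex.normSq ω₁ ≤ 1 := by
    rw [← Complex.sq_norm]; nlinarith [norm_nonneg ω₁]
  have hn₂ : Complex.normSq ω₂ ≤ 1 := by
    rw [← Complex.sq_norm]; nlinarith [norm_nonneg ω₂]
  have hn₃ : Complex.normSq ω₃ ≤ 1 := by
    rw [← Complex.sq_norm]; nlinarith [norm_nonneg ω₃]
  constructor
  · intro hQ
    have hQM : ∀ x y z : ℂ,
        0 ≤ (1 - Complex.normSq ω₁) * Complex.normSq x
          + (1 - Complex.normSq ω₂ - Complex.normSq α₁) * Complex.normSq y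
          + (1 - Complex.normSq ω₃ - Complex.normSq α₂ - Complex.normSq β) * Complex.normSq z
          + 2 * ((-((starRingEnd ℂ) ω₁ * α₁)) * (starRingEnd ℂ) x * y).re
          + 2 * ((-((starRingEnd ℂ) ω₁ * β)) * (starRingEnd ℂ) x * z).re
          + 2 * ((-((starRingEnd ℂ) α₁ * β + (starRingEnd ℂ) ω₂ * α₂))
              * (starRingEnd ℂ) y * z).re := by
      intro x y z
      have h1 := hQ x y z
      have h2 := Contraction3x3Aux.Mform ω₁ ω₂ ω₃ α₁ α₂ β x y z
      linarith
    -- first 2x2 necessity : bound on α₁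
    obtain ⟨ha0, hb0, hK1⟩ := Contraction3x3Aux.herm2_nec (1 - Complex.normSq ω₁)
        (1 - Complex.normSq ω₂ - Complex.normSq α₁) ((starRingEnd ℂ) ω₁ * α₁) (by
      intro x y
      have h := hQM x y 0
      simp only [Complex.normSq_zero, mul_zero, Complex.zero_re, add_zero] at h
      have hre : ((-((starRingEnd ℂ) ω₁ * α₁)) * (starRingEnd ℂ) x * y).re
          = -(((starRingEnd ℂ) ω₁ * α₁) * (starRingEnd ℂ) x * y).re := by
        rw [neg_mul, neg_mul, Complex.neg_re]
      rw [hre] at h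
      linarith)
    have hnK1 : Complex.normSq ((starRingEnd ℂ) ω₁ * α₁)
        = Complex.normSq ω₁ * Complex.normSq α₁ := by
      rw [Complex.normSq_mul, Complex.normSq_conj]
    have hA1 : Complex.normSq α₁ ≤ (1 - Complex.normSq ω₁) * (1 - Complex.normSq ω₂) := by
      nlinarith [hK1]
    -- second 2x2 necessity : bound on α₂
    obtain ⟨_, hc2, hK2⟩ := Contraction3x3Aux.herm2_nec (1 - Complex.normSq ω₂)
        (1 - Complex.normSq ω₃ - Complex.normSq α₂) ((starRingEnd ℂ) ω₂ * α₂) (by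
      intro y z
      have h := hQM 0 y z
      simp only [Complex.normSq_zero, mul_zero, zero_mul, map_zero, Complex.zero_re,
        add_zero, zero_add] at h
      have hcomb := Contraction3x3Aux.normSq_comb2 α₁ β y z
      have hpos : 0 ≤ Complex.normSq (α₁ * y + β * z) := Complex.normSq_nonneg _
      have hre : ((-((starRingEnd ℂ) α₁ * β + (starRingEnd ℂ) ω₂ * α₂))
            * (starRingEnd ℂ) y * z).re
          = -(((starRingEnd ℂ) α₁ * β) * (starRingEnd ℂ) y * z).re
            - (((starRingEnd ℂ) ω₂ * α₂) * (starRingEnd ℂ) y * z).re := by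
        have e : (-((starRingEnd ℂ) α₁ * β + (starRingEnd ℂ) ω₂ * α₂))
              * (starRingEnd ℂ) y * z
            = -(((starRingEnd ℂ) α₁ * β) * (starRingEnd ℂ) y * z)
              - (((starRingEnd ℂ) ω₂ * α₂) * (starRingEnd ℂ) y * z) := by ring
        rw [e, Complex.sub_re, Complex.neg_re]
      rw [hre] at h
      linarith)
    have hnK2 : Complex.normSq ((starRingEnd ℂ) ω₂ * α₂)
        = Complex.normSq ω₂ * Complex.normSq α₂ := by
      rw [Complex.normSq_mul, Complex.normSq_conj]
    have hA2 : Complex.normSq α₂ ≤ (1 - Complex.normSq ω₂) * (1 - Complex.normSq ω₃) := by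
      nlinarith [hK2]
    rcases lt_or_eq_of_le hω₂ with hw2lt | hw2eq
    · -- |ω₂| < 1
      have hd2 : 0 < 1 - Complex.normSq ω₂ := by
        rw [← Complex.sq_norm]; nlinarith [norm_nonneg ω₂]
      -- the (2,3) 2x2 minor information
      obtain ⟨hb0', hc0, hK0⟩ := Contraction3x3Aux.herm2_nec
          (1 - Complex.normSq ω₂ - Complex.normSq α₁)
          (1 - Complex.normSq ω₃ - Complex.normSq α₂ - Complex.normSq β)
          ((starRingEnd ℂ) α₁ * β + (starRingEnd ℂ) ω₂ * α₂) (by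
        intro y z
        have h := hQM 0 y z
        simp only [Complex.normSq_zero, mul_zero, zero_mul, map_zero, Complex.zero_re,
          add_zero, zero_add] at h
        have hre : ((-((starRingEnd ℂ) α₁ * β + (starRingEnd ℂ) ω₂ * α₂))
              * (starRingEnd ℂ) y * z).re
            = -((((starRingEnd ℂ) α₁ * β + (starRingEnd ℂ) ω₂ * α₂))
              * (starRingEnd ℂ) y * z).re := by
          rw [neg_mul, neg_mul, Complex.neg_re]
        rw [hre] at h
        linarith)
      have hICeq := Contraction3x3Aux.IC ω₂ ω₃ α₁ α₂ β
      refine Or.inl ⟨hw2lt, hA1, hA2, ?_⟩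
      by_cases hw1 : ω₁ = 0
      · subst hw1
        simp only [Complex.normSq_zero] at hA1 ⊢
        have h8 : 0 ≤ (1 - Complex.normSq ω₃ - Complex.normSq α₂ - Complex.normSq β)
            * (1 - Complex.normSq ω₂ - Complex.normSq α₁)
            - Complex.normSq ((starRingEnd ℂ) α₁ * β + (starRingEnd ℂ) ω₂ * α₂) := by
          nlinarith [hK0]
        have h9 := mul_nonneg hd2.le h8
        rw [hICeq] at h9
        nlinarith [h9]
      · have hu1 : 0 < Complex.normSq ω₁ := Complex.normSq_pos.mpr hw1
        have hbpos : 0 < 1 - Complex.normSq ω₂ - Complex.normSq α₁ := by nlinarith [hA1]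
        have hxz : ∀ x z : ℂ, 2 * ((((-((starRingEnd ℂ) ω₁ * α₁))
              * (-((starRingEnd ℂ) α₁ * β + (starRingEnd ℂ) ω₂ * α₂))
              - (-((starRingEnd ℂ) ω₁ * β))
                * ((1 - Complex.normSq ω₂ - Complex.normSq α₁ : ℝ) : ℂ)))
              * (starRingEnd ℂ) x * z).re
            ≤ ((1 - Complex.normSq ω₁) * (1 - Complex.normSq ω₂ - Complex.normSq α₁)
                  - Complex.normSq (-((starRingEnd ℂ) ω₁ * α₁))) * Complex.normSq x
              + ((1 - Complex.normSq ω₃ - Complex.normSq α₂ - Complex.normSq β)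
                    * (1 - Complex.normSq ω₂ - Complex.normSq α₁)
                  - Complex.normSq (-((starRingEnd ℂ) α₁ * β + (starRingEnd ℂ) ω₂ * α₂)))
                  * Complex.normSq z := by
          intro x z
          have h := hQM (((1 - Complex.normSq ω₂ - Complex.normSq α₁ : ℝ) : ℂ) * x)
            (-((starRingEnd ℂ) (-((starRingEnd ℂ) ω₁ * α₁)) * x
              + (-((starRingEnd ℂ) α₁ * β + (starRingEnd ℂ) ω₂ * α₂)) * z))
            (((1 - Complex.normSq ω₂ - Complex.normSq α₁ : ℝ) : ℂ) * z)
          have hs := Contraction3x3Aux.schur_mid (1 - Complex.normSq ω₁)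
            (1 - Complex.normSq ω₂ - Complex.normSq α₁)
            (1 - Complex.normSq ω₃ - Complex.normSq α₂ - Complex.normSq β)
            (-((starRingEnd ℂ) ω₁ * α₁)) (-((starRingEnd ℂ) ω₁ * β))
            (-((starRingEnd ℂ) α₁ * β + (starRingEnd ℂ) ω₂ * α₂)) x z
          rw [hs] at h
          have hG := (mul_nonneg_iff_of_pos_left hbpos).mp h
          linarith [hG]
        obtain ⟨hA'0, hC0, hKg⟩ := Contraction3x3Aux.herm2_nec _ _ _ hxz
        have hKid : (-((starRingEnd ℂ) ω₁ * α₁))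
              * (-((starRingEnd ℂ) α₁ * β + (starRingEnd ℂ) ω₂ * α₂))
              - (-((starRingEnd ℂ) ω₁ * β))
                * ((1 - Complex.normSq ω₂ - Complex.normSq α₁ : ℝ) : ℂ)
            = (starRingEnd ℂ) ω₁ * (β * ((1 - Complex.normSq ω₂ : ℝ) : ℂ)
              + α₁ * α₂ * (starRingEnd ℂ) ω₂) := by
          apply Complex.ext <;>
            simp only [Complex.normSq_apply, Complex.add_re, Complex.add_im, Complex.sub_re,
              Complex.sub_im, Complex.neg_re, Complex.neg_im, Complex.mul_re, Complex.mul_im,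
              Complex.conj_re, Complex.conj_im, Complex.ofReal_re, Complex.ofReal_im,
              Complex.one_re, Complex.one_im] <;> ring
        rw [hKid] at hKg
        have hgK : Complex.normSq ((starRingEnd ℂ) ω₁ * (β * ((1 - Complex.normSq ω₂ : ℝ) : ℂ)
              + α₁ * α₂ * (starRingEnd ℂ) ω₂))
            = Complex.normSq ω₁ * Complex.normSq (β * ((1 - Complex.normSq ω₂ : ℝ) : ℂ)
              + α₁ * α₂ * (starRingEnd ℂ) ω₂) := by
          rw [Complex.normSq_mul, Complex.normSq_conj]
        rw [hgK] at hKg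
        have hnP : Complex.normSq (-((starRingEnd ℂ) ω₁ * α₁))
            = Complex.normSq ω₁ * Complex.normSq α₁ := by
          rw [Complex.normSq_neg, Complex.normSq_mul, Complex.normSq_conj]
        have hnR : Complex.normSq (-((starRingEnd ℂ) α₁ * β + (starRingEnd ℂ) ω₂ * α₂))
            = Complex.normSq ((starRingEnd ℂ) α₁ * β + (starRingEnd ℂ) ω₂ * α₂) :=
          Complex.normSq_neg _
        rw [hnP, hnR] at hKg
        -- now conclude g ≤ A * B
        have hg0 : 0 ≤ Complex.normSq (β * ((1 - Complex.normSq ω₂ : ℝ) : ℂ)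
          + α₁ * α₂ * (starRingEnd ℂ) ω₂) := Complex.normSq_nonneg _
        have heqA : (1 - Complex.normSq ω₁) * (1 - Complex.normSq ω₂ - Complex.normSq α₁)
            - Complex.normSq ω₁ * Complex.normSq α₁
            = (1 - Complex.normSq ω₁) * (1 - Complex.normSq ω₂) - Complex.normSq α₁ := by
          ring
        rw [heqA] at hKg
        have h5 := mul_le_mul_of_nonneg_left hKg hd2.le
        have h6 : (1 - Complex.normSq ω₂)
              * (((1 - Complex.normSq ω₁) * (1 - Complex.normSq ω₂) - Complex.normSq α₁)
                * ((1 - Complex.normSq ω₃ - Complex.normSq α₂ - Complex.normSq β)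
                    * (1 - Complex.normSq ω₂ - Complex.normSq α₁)
                  - Complex.normSq ((starRingEnd ℂ) α₁ * β + (starRingEnd ℂ) ω₂ * α₂)))
            = ((1 - Complex.normSq ω₁) * (1 - Complex.normSq ω₂) - Complex.normSq α₁)
              * ((1 - Complex.normSq ω₂)
                * ((1 - Complex.normSq ω₃ - Complex.normSq α₂ - Complex.normSq β)
                    * (1 - Complex.normSq ω₂ - Complex.normSq α₁)
                  - Complex.normSq ((starRingEnd ℂ) α₁ * β + (starRingEnd ℂ) ω₂ * α₂))) := by
          ring
        rw [h6, hICeq] at h5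
        have h7 : (1 - Complex.normSq ω₂ - Complex.normSq α₁)
              * Complex.normSq (β * ((1 - Complex.normSq ω₂ : ℝ) : ℂ)
                + α₁ * α₂ * (starRingEnd ℂ) ω₂)
            ≤ (1 - Complex.normSq ω₂ - Complex.normSq α₁)
              * (((1 - Complex.normSq ω₁) * (1 - Complex.normSq ω₂) - Complex.normSq α₁)
                * ((1 - Complex.normSq ω₂) * (1 - Complex.normSq ω₃) - Complex.normSq α₂)) := by
          nlinarith [h5]
        exact le_of_mul_le_mul_left h7 hbpos
    · -- |ω₂| = 1
      have hn2 : Complex.normSq ω₂ = 1 := by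
        rw [← Complex.sq_norm, hw2eq]; norm_num
      have hα₁ : α₁ = 0 := by
        rw [← Complex.normSq_eq_zero]
        nlinarith [hA1, Complex.normSq_nonneg α₁]
      have hα₂ : α₂ = 0 := by
        rw [← Complex.normSq_eq_zero]
        nlinarith [hA2, Complex.normSq_nonneg α₂]
      subst hα₁; subst hα₂
      obtain ⟨_, hcb, hK3⟩ := Contraction3x3Aux.herm2_nec (1 - Complex.normSq ω₁)
          (1 - Complex.normSq ω₃ - Complex.normSq β) ((starRingEnd ℂ) ω₁ * β) (by
        intro x z
        have h := hQM x 0 z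
        simp only [Complex.normSq_zero, mul_zero, zero_mul, map_zero, Complex.zero_re,
          add_zero, zero_add, sub_zero] at h
        have hre : ((-((starRingEnd ℂ) ω₁ * β)) * (starRingEnd ℂ) x * z).re
            = -(((starRingEnd ℂ) ω₁ * β) * (starRingEnd ℂ) x * z).re := by
          rw [neg_mul, neg_mul, Complex.neg_re]
        rw [hre] at h
        linarith)
      have hnK3 : Complex.normSq ((starRingEnd ℂ) ω₁ * β)
          = Complex.normSq ω₁ * Complex.normSq β := by
        rw [Complex.normSq_mul, Complex.normSq_conj]
      rw [hnK3] at hK3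
      refine Or.inr ⟨hw2eq, rfl, rfl, ?_⟩
      nlinarith [hK3, hn2]
  · intro hRHS x y z
    have hMf := Contraction3x3Aux.Mform ω₁ ω₂ ω₃ α₁ α₂ β x y z
    rcases hRHS with ⟨hlt', hA1, hA2, hg⟩ | ⟨heq', hα₁, hα₂, hβ⟩
    · -- case (i): |ω₂| < 1
      have hd2 : 0 < 1 - Complex.normSq ω₂ := by
        rw [← Complex.sq_norm]; nlinarith [norm_nonneg ω₂]
      by_cases hd1 : Complex.normSq ω₁ = 1
      · -- degenerate: |ω₁| = 1
        have hα₁0 : α₁ = 0 := by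
          rw [← Complex.normSq_eq_zero]
          nlinarith [hA1, Complex.normSq_nonneg α₁]
        subst hα₁0
        have eA : (1 - Complex.normSq ω₁) * (1 - Complex.normSq ω₂)
            - Complex.normSq (0 : ℂ) = 0 := by
          rw [hd1]; simp
        rw [eA] at hg
        simp only [zero_mul, add_zero] at hg
        have hβ0 : β = 0 := by
          have h2 : β * ((1 - Complex.normSq ω₂ : ℝ) : ℂ) = 0 :=
            Complex.normSq_eq_zero.mp (le_antisymm hg (Complex.normSq_nonneg _))
          rcases mul_eq_zero.mp h2 with h | h
          · exact h
          · exfalso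
            have : (1 - Complex.normSq ω₂ : ℝ) = 0 := by exact_mod_cast h
            linarith
        subst hβ0
        have hsuff := Contraction3x3Aux.herm2_suff (1 - Complex.normSq ω₂)
            (1 - Complex.normSq ω₃ - Complex.normSq α₂) ((starRingEnd ℂ) ω₂ * α₂)
            hd2.le (by nlinarith [hA2, Complex.normSq_nonneg ω₂]) (by
              rw [Complex.normSq_mul, Complex.normSq_conj]
              nlinarith [hA2, Complex.normSq_nonneg α₂]) y z
        simp only [Complex.normSq_zero, mul_zero, zero_mul, map_zero, neg_zero, zero_add,
          add_zero, Complex.zero_re, sub_zero] at hMf ⊢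
        have hre : ((-((starRingEnd ℂ) ω₂ * α₂)) * (starRingEnd ℂ) y * z).re
            = -(((starRingEnd ℂ) ω₂ * α₂) * (starRingEnd ℂ) y * z).re := by
          rw [neg_mul, neg_mul, Complex.neg_re]
        rw [hre] at hMf
        have hx0 : (1 - Complex.normSq ω₁) * Complex.normSq x = 0 := by
          rw [hd1]; ring
        linarith [hMf, hsuff, hx0]
      · -- main case: |ω₁| < 1
        have hd1p : 0 < 1 - Complex.normSq ω₁ := by
          have : Complex.normSq ω₁ < 1 := lt_of_le_of_ne hn₁ hd1
          linarith
        have hIrc := Contraction3x3Aux.Irc ω₁ ω₂ ω₃ α₁ α₂ β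
        have hABg : 0 ≤ ((1 - Complex.normSq ω₁) * (1 - Complex.normSq ω₂) - Complex.normSq α₁)
              * ((1 - Complex.normSq ω₂) * (1 - Complex.normSq ω₃) - Complex.normSq α₂)
            - Complex.normSq (β * ((1 - Complex.normSq ω₂ : ℝ) : ℂ)
              + α₁ * α₂ * (starRingEnd ℂ) ω₂) := sub_nonneg.2 hg
        have hACr : Complex.normSq ((starRingEnd ℂ) α₁ * β
              + ((1 - Complex.normSq ω₁ : ℝ) : ℂ) * (starRingEnd ℂ) ω₂ * α₂)
            ≤ ((1 - Complex.normSq ω₁) * (1 - Complex.normSq ω₂) - Complex.normSq α₁)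
              * ((1 - Complex.normSq ω₁) * (1 - Complex.normSq ω₃)
                - (1 - Complex.normSq ω₁) * Complex.normSq α₂ - Complex.normSq β) := by
          nlinarith [hIrc, mul_nonneg hd1p.le hABg, hd2]
        have hA0 : 0 ≤ (1 - Complex.normSq ω₁) * (1 - Complex.normSq ω₂)
            - Complex.normSq α₁ := sub_nonneg.2 hA1
        have hc₁0 : 0 ≤ (1 - Complex.normSq ω₁) * (1 - Complex.normSq ω₃)
            - (1 - Complex.normSq ω₁) * Complex.normSq α₂ - Complex.normSq β := by
          rcases eq_or_lt_of_le hA0 with hAz | hAp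
          · -- A = 0
            have hAe : (1 - Complex.normSq ω₁) * (1 - Complex.normSq ω₂)
                - Complex.normSq α₁ = 0 := hAz.symm
            rw [hAe, zero_mul] at hg
            have hγ : β * ((1 - Complex.normSq ω₂ : ℝ) : ℂ)
                + α₁ * α₂ * (starRingEnd ℂ) ω₂ = 0 :=
              Complex.normSq_eq_zero.mp (le_antisymm hg (Complex.normSq_nonneg _))
            have hβ2 : β * ((1 - Complex.normSq ω₂ : ℝ) : ℂ)
                = -(α₁ * α₂ * (starRingEnd ℂ) ω₂) := by
              linear_combination hγ
            have hnsq : Complex.normSq β * ((1 - Complex.normSq ω₂)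
                  * (1 - Complex.normSq ω₂))
                = Complex.normSq α₁ * Complex.normSq α₂ * Complex.normSq ω₂ := by
              have h5 := congrArg Complex.normSq hβ2
              simp only [Complex.normSq_mul, Complex.normSq_neg, Complex.normSq_conj,
                Complex.normSq_ofReal] at h5
              linarith [h5]
            have hA1eq : Complex.normSq α₁
                = (1 - Complex.normSq ω₁) * (1 - Complex.normSq ω₂) := by linarith [hAe]
            have e : ((1 - Complex.normSq ω₁) * (1 - Complex.normSq ω₃)
                  - (1 - Complex.normSq ω₁) * Complex.normSq α₂ - Complex.normSq β)
                  * ((1 - Complex.normSq ω₂) * (1 - Complex.normSq ω₂))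
                = (1 - Complex.normSq ω₁) * (1 - Complex.normSq ω₂)
                  * ((1 - Complex.normSq ω₂) * (1 - Complex.normSq ω₃)
                    - Complex.normSq α₂) := by
              linear_combination (-1 : ℝ) * hnsq
                - (Complex.normSq α₂ * Complex.normSq ω₂) * hA1eq
            nlinarith [e, mul_pos hd2 hd2,
              mul_nonneg (mul_nonneg hd1p.le hd2.le) (sub_nonneg.2 hA2)]
          · nlinarith [hACr, Complex.normSq_nonneg ((starRingEnd ℂ) α₁ * β
              + ((1 - Complex.normSq ω₁ : ℝ) : ℂ) * (starRingEnd ℂ) ω₂ * α₂), hAp]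
        have hsuff := Contraction3x3Aux.herm2_suff
            ((1 - Complex.normSq ω₁) * (1 - Complex.normSq ω₂) - Complex.normSq α₁)
            ((1 - Complex.normSq ω₁) * (1 - Complex.normSq ω₃)
              - (1 - Complex.normSq ω₁) * Complex.normSq α₂ - Complex.normSq β)
            ((starRingEnd ℂ) α₁ * β
              + ((1 - Complex.normSq ω₁ : ℝ) : ℂ) * (starRingEnd ℂ) ω₂ * α₂)
            hA0 hc₁0 hACr y z
        have hs := Contraction3x3Aux.schur_first (1 - Complex.normSq ω₁)
            (1 - Complex.normSq ω₂ - Complex.normSq α₁)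
            (1 - Complex.normSq ω₃ - Complex.normSq α₂ - Complex.normSq β)
            (-((starRingEnd ℂ) ω₁ * α₁)) (-((starRingEnd ℂ) ω₁ * β))
            (-((starRingEnd ℂ) α₁ * β + (starRingEnd ℂ) ω₂ * α₂)) x y z
        have hnP : Complex.normSq (-((starRingEnd ℂ) ω₁ * α₁))
            = Complex.normSq ω₁ * Complex.normSq α₁ := by
          rw [Complex.normSq_neg, Complex.normSq_mul, Complex.normSq_conj]
        have hnQ : Complex.normSq (-((starRingEnd ℂ) ω₁ * β))
            = Complex.normSq ω₁ * Complex.normSq β := by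
          rw [Complex.normSq_neg, Complex.normSq_mul, Complex.normSq_conj]
        rw [hnP, hnQ] at hs
        have hrid : ((1 - Complex.normSq ω₁ : ℝ) : ℂ)
              * (-((starRingEnd ℂ) α₁ * β + (starRingEnd ℂ) ω₂ * α₂))
              - (starRingEnd ℂ) (-((starRingEnd ℂ) ω₁ * α₁)) * (-((starRingEnd ℂ) ω₁ * β))
            = -((starRingEnd ℂ) α₁ * β
              + ((1 - Complex.normSq ω₁ : ℝ) : ℂ) * (starRingEnd ℂ) ω₂ * α₂) := by
          apply Complex.ext <;>
            simp only [Complex.normSq_apply, Complex.add_re, Complex.add_im, Complex.sub_re,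
              Complex.sub_im, Complex.neg_re, Complex.neg_im, Complex.mul_re, Complex.mul_im,
              Complex.conj_re, Complex.conj_im, Complex.ofReal_re, Complex.ofReal_im,
              Complex.one_re, Complex.one_im, map_neg, _root_.map_mul] <;> ring
        rw [hrid] at hs
        have hre : ((-((starRingEnd ℂ) α₁ * β
              + ((1 - Complex.normSq ω₁ : ℝ) : ℂ) * (starRingEnd ℂ) ω₂ * α₂))
              * (starRingEnd ℂ) y * z).re
            = -((((starRingEnd ℂ) α₁ * β
              + ((1 - Complex.normSq ω₁ : ℝ) : ℂ) * (starRingEnd ℂ) ω₂ * α₂))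
              * (starRingEnd ℂ) y * z).re := by
          rw [neg_mul, neg_mul, Complex.neg_re]
        rw [hre] at hs
        have eA : (1 - Complex.normSq ω₁) * (1 - Complex.normSq ω₂ - Complex.normSq α₁)
            - Complex.normSq ω₁ * Complex.normSq α₁
            = (1 - Complex.normSq ω₁) * (1 - Complex.normSq ω₂) - Complex.normSq α₁ := by
          ring
        have eC : (1 - Complex.normSq ω₁)
              * (1 - Complex.normSq ω₃ - Complex.normSq α₂ - Complex.normSq β)
            - Complex.normSq ω₁ * Complex.normSq β
            = (1 - Complex.normSq ω₁) * (1 - Complex.normSq ω₃)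
              - (1 - Complex.normSq ω₁) * Complex.normSq α₂ - Complex.normSq β := by
          ring
        rw [eA, eC] at hs
        have hN := Complex.normSq_nonneg (((1 - Complex.normSq ω₁ : ℝ) : ℂ) * x
          + (-((starRingEnd ℂ) ω₁ * α₁)) * y + (-((starRingEnd ℂ) ω₁ * β)) * z)
        nlinarith [hs, hsuff, hN, hMf, hd1p]
    · -- case (ii): |ω₂| = 1
      subst hα₁; subst hα₂
      have hn2 : Complex.normSq ω₂ = 1 := by
        rw [← Complex.sq_norm, heq']; norm_num
      have hsuff := Contraction3x3Aux.herm2_suff (1 - Complex.normSq ω₁)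
          (1 - Complex.normSq ω₃ - Complex.normSq β) ((starRingEnd ℂ) ω₁ * β)
          (by linarith) (by nlinarith [hβ, Complex.normSq_nonneg ω₁, hn₃]) (by
            rw [Complex.normSq_mul, Complex.normSq_conj]
            nlinarith [hβ]) x z
      simp only [Complex.normSq_zero, mul_zero, zero_mul, map_zero, neg_zero, zero_add,
        add_zero, Complex.zero_re, sub_zero] at hMf ⊢
      have hre : ((-((starRingEnd ℂ) ω₁ * β)) * (starRingEnd ℂ) x * z).re
          = -(((starRingEnd ℂ) ω₁ * β) * (starRingEnd ℂ) x * z).re := by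
        rw [neg_mul, neg_mul, Complex.neg_re]
      rw [hre] at hMf
      have hy0 : (1 - Complex.normSq ω₂) * Complex.normSq y = 0 := by
        rw [hn2]; ring
      linarith [hMf, hsuff, hy0]
end

section
/- Let T be the 4×4 upper-triangular complex matrix with rows (ω₁, α₁, β₁, γ), (0, ω₂, α₂, β₂), (0, 0, ω₃, α₃), (0, 0, 0, ω₄), where |ω₁| ≤ 1, |ω₄| ≤ 1 and |ω₂| = |ω₃| = 1. Then T is a contraction on ℂ⁴ if and only if: α₁ = α₂ = α₃ = 0; |β₁|² ≤ (1−|ω₁|²)(1−|ω₃|²); |β₂|² ≤ (1−|ω₂|²)(1−|ω₄|²); and |γ|² ≤ (1−|ω₁|²)(1−|ω₄|²). -/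
open Complex Matrix

private lemma contraction_iff_sum {n : ℕ} (T : Matrix (Fin n) (Fin n) ℂ) :
    ‖Matrix.toEuclideanCLM (𝕜 := ℂ) T‖ ≤ 1 ↔
      ∀ x : Fin n → ℂ, ∑ i, ‖(T.mulVec x) i‖ ^ 2 ≤ ∑ i, ‖x i‖ ^ 2 := by
  rw [ContinuousLinearMap.opNorm_le_iff zero_le_one]
  constructor
  · intro h x
    have := h (WithLp.toLp 2 x)
    rw [Matrix.toEuclideanCLM_toLp, one_mul] at this
    rw [EuclideanSpace.norm_eq, EuclideanSpace.norm_eq] at this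
    simp only [PiLp.toLp_apply] at this
    have h2 : (0:ℝ) ≤ ∑ i, ‖T.mulVec x i‖ ^ 2 := Finset.sum_nonneg fun i _ => sq_nonneg _
    have h3 := pow_le_pow_left₀ (Real.sqrt_nonneg _) this 2
    rw [Real.sq_sqrt h2, Real.sq_sqrt (Finset.sum_nonneg fun i _ => sq_nonneg _)] at h3
    simpa using h3
  · intro h y
    rw [one_mul]
    have hy : y = WithLp.toLp 2 (WithLp.ofLp y) := rfl
    rw [hy, Matrix.toEuclideanCLM_toLp]
    rw [EuclideanSpace.norm_eq, EuclideanSpace.norm_eq]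
    exact Real.sqrt_le_sqrt (by simpa using h (WithLp.ofLp y))

private lemma core (p q a b c : ℝ) (hp0 : 0 ≤ p) (hq0 : 0 ≤ q) (ha : 0 ≤ a) (hb : 0 ≤ b)
    (hc : 0 ≤ c) (hp : p ≤ 1) (hq : q ≤ 1) (h : c^2 ≤ (1-p^2)*(1-q^2)) :
    (p*a+c*b)^2 + (q*b)^2 ≤ a^2 + b^2 := by
  rcases eq_or_lt_of_le hq with hq1 | hq1
  · subst hq1
    have hc0 : c = 0 := by nlinarith
    subst hc0
    nlinarith [mul_nonneg (by nlinarith : (0:ℝ) ≤ 1-p^2) (sq_nonneg a)]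
  · have ht : 0 < 1 - q^2 := by nlinarith
    nlinarith [sq_nonneg (c*a - p*(1-q^2)*b),
      mul_nonneg (by nlinarith : (0:ℝ) ≤ (1-q^2)*(1-p^2) - c^2)
        (by positivity : (0:ℝ) ≤ a^2 + (1-q^2)*b^2), ht.le]

private lemma vanish (A : ℝ) (hA : 0 ≤ A) (h : ∀ t : ℝ, 0 ≤ t → (2*t+1) * A ≤ 1) : A = 0 := by
  by_contra hne
  have hpos : 0 < A := lt_of_le_of_ne hA (Ne.symm hne)
  have h2 := h (1/A) (by positivity)
  have h1 : (2*(1/A)+1)*A = 2 + A := by field_simp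
  rw [h1] at h2; linarith

private lemma absq_eq_zero {z : ℂ} (h : ‖z‖ ^ 2 ≤ 0) : z = 0 := by
  have h0 : ‖z‖ ^ 2 = 0 := le_antisymm h (sq_nonneg _)
  have : ‖z‖ = 0 := by
    exact pow_eq_zero_iff two_ne_zero |>.mp h0
  simpa using this

set_option maxHeartbeats 1000000 in
theorem contraction_criterion_4x4_omega2_omega3_unimodular
    (ω₁ ω₂ ω₃ ω₄ α₁ α₂ α₃ β₁ β₂ γ : ℂ)
    (hω₁ : ‖ω₁‖ ≤ 1) (hω₄ : ‖ω₄‖ ≤ 1)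
    (hω₂ : ‖ω₂‖ = 1) (hω₃ : ‖ω₃‖ = 1) :
    IsContraction !![ω₁, α₁, β₁, γ; 0, ω₂, α₂, β₂; 0, 0, ω₃, α₃; 0, 0, 0, ω₄] ↔
      (α₁ = 0 ∧ α₂ = 0 ∧ α₃ = 0 ∧
        nsq β₁ ≤ d ω₁ * d ω₃ ∧
        nsq β₂ ≤ d ω₂ * d ω₄ ∧
        nsq γ ≤ d ω₁ * d ω₄) := by
  have hiff : IsContraction !![ω₁, α₁, β₁, γ; 0, ω₂, α₂, β₂; 0, 0, ω₃, α₃; 0, 0, 0, ω₄] ↔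
      ∀ z1 z2 z3 z4 : ℂ,
        ‖ω₁ * z1 + α₁ * z2 + β₁ * z3 + γ * z4‖ ^ 2
          + ‖ω₂ * z2 + α₂ * z3 + β₂ * z4‖ ^ 2
          + ‖ω₃ * z3 + α₃ * z4‖ ^ 2
          + (‖ω₄‖ * ‖z4‖) ^ 2
        ≤ ‖z1‖ ^ 2 + ‖z2‖ ^ 2 + ‖z3‖ ^ 2 + ‖z4‖ ^ 2 := by
    rw [IsContraction, contraction_iff_sum]
    constructor
    · intro h z1 z2 z3 z4
      have := h ![z1, z2, z3, z4]
      simpa [Matrix.mulVec, dotProduct, Fin.sum_univ_four, Matrix.vecHead,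
        Matrix.vecTail] using this
    · intro h x
      have := h (x 0) (x 1) (x 2) (x 3)
      simpa [Matrix.mulVec, dotProduct, Fin.sum_univ_four, Matrix.vecHead,
        Matrix.vecTail] using this
  rw [hiff]
  constructor
  · intro h
    have h2 := h 0 1 0 0
    simp [hω₂] at h2
    have hα₁ : α₁ = 0 := h2
    have h3 := h 0 0 1 0
    simp [hω₃] at h3
    have hβ₁ : β₁ = 0 := absq_eq_zero (by nlinarith [sq_nonneg (‖α₂‖)])
    have hα₂ : α₂ = 0 := absq_eq_zero (by nlinarith [sq_nonneg (‖β₁‖)])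
    have hu3 : ω₃ * (starRingEnd ℂ) ω₃ = 1 := by
      rw [Complex.mul_conj]; norm_cast; rw [Complex.normSq_eq_norm_sq, hω₃]; norm_num
    have hα₃ : α₃ = 0 := by
      have key : ∀ t : ℝ, 0 ≤ t → (2*t+1) * (‖α₃‖ ^ 2) ≤ 1 := by
        intro t ht
        have hx := h 0 0 ((t:ℂ) * (starRingEnd ℂ) ω₃ * α₃) 1
        have e3 : ω₃ * ((t:ℂ) * (starRingEnd ℂ) ω₃ * α₃) + α₃ = ((t+1 : ℝ):ℂ) * α₃ := by
          push_cast
          linear_combination (t:ℂ) * α₃ * hu3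
        have ea : ‖(t:ℂ) * (starRingEnd ℂ) ω₃ * α₃‖ = t * ‖α₃‖ := by
          rw [norm_mul, norm_mul, Complex.norm_conj, hω₃, Complex.norm_real, Real.norm_eq_abs,
            _root_.abs_of_nonneg ht, mul_one]
        have ec : ‖((t+1 : ℝ):ℂ) * α₃‖ = (t+1) * ‖α₃‖ := by
          rw [norm_mul, Complex.norm_real, Real.norm_eq_abs, _root_.abs_of_nonneg (by linarith : (0:ℝ) ≤ t+1)]
        have eone : ‖(1:ℂ)‖ = 1 := norm_one
        simp only [mul_zero, zero_mul, zero_add, add_zero, mul_one, map_zero, norm_zero, hβ₁,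
          hα₂, e3, ea, ec, eone] at hx
        nlinarith [sq_nonneg (‖γ‖), sq_nonneg (‖β₂‖),
          sq_nonneg (‖ω₄‖), sq_nonneg (‖α₃‖)]
      exact absq_eq_zero (le_of_eq (vanish _ (sq_nonneg _) key))
    have hu2 : ω₂ * (starRingEnd ℂ) ω₂ = 1 := by
      rw [Complex.mul_conj]; norm_cast; rw [Complex.normSq_eq_norm_sq, hω₂]; norm_num
    have hβ₂ : β₂ = 0 := by
      have key : ∀ t : ℝ, 0 ≤ t → (2*t+1) * (‖β₂‖ ^ 2) ≤ 1 := by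
        intro t ht
        have hx := h 0 ((t:ℂ) * (starRingEnd ℂ) ω₂ * β₂) 0 1
        have e2 : ω₂ * ((t:ℂ) * (starRingEnd ℂ) ω₂ * β₂) + β₂ = ((t+1 : ℝ):ℂ) * β₂ := by
          push_cast
          linear_combination (t:ℂ) * β₂ * hu2
        have ea : ‖(t:ℂ) * (starRingEnd ℂ) ω₂ * β₂‖ = t * ‖β₂‖ := by
          rw [norm_mul, norm_mul, Complex.norm_conj, hω₂, Complex.norm_real, Real.norm_eq_abs,
            _root_.abs_of_nonneg ht, mul_one]
        have ec : ‖((t+1 : ℝ):ℂ) * β₂‖ = (t+1) * ‖β₂‖ := by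
          rw [norm_mul, Complex.norm_real, Real.norm_eq_abs, _root_.abs_of_nonneg (by linarith : (0:ℝ) ≤ t+1)]
        have eone : ‖(1:ℂ)‖ = 1 := norm_one
        simp only [mul_zero, zero_mul, zero_add, add_zero, mul_one, map_zero, norm_zero, hα₁,
          hα₃, e2, ea, ec, eone] at hx
        nlinarith [sq_nonneg (‖γ‖), sq_nonneg (‖ω₄‖),
          sq_nonneg (‖β₂‖)]
      exact absq_eq_zero (le_of_eq (vanish _ (sq_nonneg _) key))
    refine ⟨hα₁, hα₂, hα₃, ?_, ?_, ?_⟩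
    · simp [hβ₁, nsq, d, hω₃]
    · simp [hβ₂, nsq, d, hω₂]
    · -- the γ condition
      have hu1 : ω₁ * (starRingEnd ℂ) ω₁ = ((‖ω₁‖ ^ 2 : ℝ) : ℂ) := by
        rw [Complex.mul_conj]; norm_cast; rw [Complex.normSq_eq_norm_sq]
      have hu1' : ω₁ * (starRingEnd ℂ) ω₁ = ((‖ω₁‖ : ℝ) : ℂ)^2 := by
        rw [hu1]; push_cast; ring
      have e1 : ∀ t : ℝ, ω₁ * ((t:ℂ) * (starRingEnd ℂ) ω₁ * γ) + γ
          = ((t * ‖ω₁‖ ^ 2 + 1 : ℝ):ℂ) * γ := by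
        intro t
        push_cast
        linear_combination (t:ℂ) * γ * hu1'
      have ea : ∀ t : ℝ, 0 ≤ t →
          ‖(t:ℂ) * (starRingEnd ℂ) ω₁ * γ‖ = t * ‖ω₁‖ * ‖γ‖ := by
        intro t ht
        rw [norm_mul, norm_mul, Complex.norm_conj, Complex.norm_real, Real.norm_eq_abs,
          _root_.abs_of_nonneg ht]
      have hgen : ∀ t : ℝ, 0 ≤ t →
          (t * ‖ω₁‖ ^ 2 + 1) ^ 2 * ‖γ‖ ^ 2 + ‖ω₄‖ ^ 2
            ≤ (t * ‖ω₁‖ * ‖γ‖) ^ 2 + 1 := by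
        intro t ht
        have hx := h ((t:ℂ) * (starRingEnd ℂ) ω₁ * γ) 0 0 1
        have eb : ‖(((t * ‖ω₁‖ ^ 2 + 1 : ℝ)):ℂ)‖
            = t * ‖ω₁‖ ^ 2 + 1 := by
          rw [Complex.norm_real, Real.norm_eq_abs]
          exact _root_.abs_of_nonneg (by positivity)
        have ec : ‖((t * ‖ω₁‖ ^ 2 + 1 : ℝ):ℂ) * γ‖
            = (t * ‖ω₁‖ ^ 2 + 1) * ‖γ‖ := by
          rw [norm_mul, eb]
        have eone : ‖(1:ℂ)‖ = 1 := norm_one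
        simp only [mul_zero, zero_mul, zero_add, add_zero, mul_one, map_zero, norm_zero, hβ₂,
          hα₃, e1 t, ea t ht, ec, eone] at hx
        nlinarith [hx]
      rcases eq_or_lt_of_le hω₁ with hp1 | hp1
      · -- |ω₁| = 1
        have key : ∀ t : ℝ, 0 ≤ t → (2*t+1) * (‖γ‖ ^ 2) ≤ 1 := by
          intro t ht
          have := hgen t ht
          rw [hp1] at this
          nlinarith [sq_nonneg (‖ω₄‖)]
        have hg0 : ‖γ‖ ^ 2 = 0 := vanish _ (sq_nonneg _) key
        simp [nsq, d, hp1, hg0]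
      · -- |ω₁| < 1
        set s : ℝ := 1 - ‖ω₁‖ ^ 2 with hs_def
        have hs : 0 < s := by nlinarith [norm_nonneg ω₁]
        have hx := hgen (1/s) (by positivity)
        have hup : 1/s * ‖ω₁‖ ^ 2 + 1 = 1/s := by
          have hne : (1 - ‖ω₁‖ ^ 2) ≠ 0 := by rw [← hs_def]; exact hs.ne'
          rw [hs_def]; field_simp; ring
        rw [hup] at hx
        have h2 := mul_le_mul_of_nonneg_left hx (by positivity : (0:ℝ) ≤ s^2)
        have e2 : s^2 * ((1/s)^2 * ‖γ‖ ^ 2 + ‖ω₄‖ ^ 2)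
            = ‖γ‖ ^ 2 + s^2 * ‖ω₄‖ ^ 2 := by
          field_simp
        have e3 : s^2 * ((1/s * ‖ω₁‖ * ‖γ‖)^2 + 1)
            = ‖ω₁‖ ^ 2 * ‖γ‖ ^ 2 + s^2 := by
          field_simp
        rw [e2, e3] at h2
        simp only [nsq, d]
        nlinarith [h2, hs, hs_def, sq_nonneg (‖ω₄‖)]
  · rintro ⟨hα₁, hα₂, hα₃, hb1, hb2, hg⟩
    have hβ₁ : β₁ = 0 := by
      refine absq_eq_zero ?_
      have hd3 : d ω₃ = 0 := by simp [d, hω₃]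
      have := hb1
      rw [hd3, mul_zero] at this
      simpa [nsq] using this
    have hβ₂ : β₂ = 0 := by
      refine absq_eq_zero ?_
      have hd2 : d ω₂ = 0 := by simp [d, hω₂]
      have := hb2
      rw [hd2, zero_mul] at this
      simpa [nsq] using this
    intro z1 z2 z3 z4
    simp only [hα₁, hα₂, hα₃, hβ₁, hβ₂, zero_mul, add_zero, norm_mul, hω₂, hω₃, one_mul]
    have tri : ‖ω₁ * z1 + γ * z4‖
        ≤ ‖ω₁‖ * ‖z1‖ + ‖γ‖ * ‖z4‖ := by
      calc ‖ω₁ * z1 + γ * z4‖ ≤ ‖ω₁ * z1‖ + ‖γ * z4‖ :=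
            norm_add_le _ _
        _ = _ := by rw [norm_mul, norm_mul]
    have hcore := core (‖ω₁‖) (‖ω₄‖) (‖z1‖) (‖z4‖)
      (‖γ‖) (norm_nonneg _) (norm_nonneg _) (norm_nonneg _)
      (norm_nonneg _) (norm_nonneg _) hω₁ hω₄ (by simpa [nsq, d] using hg)
    have tri2 : ‖ω₁ * z1 + γ * z4‖ ^ 2
        ≤ (‖ω₁‖ * ‖z1‖ + ‖γ‖ * ‖z4‖) ^ 2 :=
      pow_le_pow_left₀ (norm_nonneg _) tri 2
    nlinarith [tri2, hcore]
end

section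
/- Let ω, α ∈ ℂ with ω ≠ 0 and |α|² + |ω|² ≤ 1, let Σ = |α|² + |ω|², and let M be the 2×2 complex matrix with rows (1−|ω|², −ω̄α) and (−ᾱω, 1−|α|²). Let N be the 2×2 matrix (1/Σ) times the matrix with rows (|α|² + |ω|²·√(1−Σ), −αω̄(1−√(1−Σ))) and (−ᾱω(1−√(1−Σ)), |ω|² + |α|²·√(1−Σ)). Then N is positive semidefinite and N² = M; that is, N is the (unique) positive semidefinite square root of M. -/
open Complex Matrix
open scoped ComplexOrder

theorem sqrt_2x2
    (ω α : ℂ) (hω : ω ≠ 0) (hS : ‖α‖ ^ 2 + ‖ω‖ ^ 2 ≤ 1) :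
    letI S : ℝ := ‖α‖ ^ 2 + ‖ω‖ ^ 2
    letI M : Matrix (Fin 2) (Fin 2) ℂ :=
      !![1 - (‖ω‖ : ℂ) ^ 2, -((starRingEnd ℂ) ω * α);
         -((starRingEnd ℂ) α * ω), 1 - (‖α‖ : ℂ) ^ 2]
    letI N : Matrix (Fin 2) (Fin 2) ℂ :=
      ((S : ℂ))⁻¹ •
        !![((‖α‖ ^ 2 : ℝ) : ℂ) + ((‖ω‖ ^ 2 : ℝ) : ℂ) * ((Real.sqrt (1 - S) : ℝ) : ℂ),
            -(α * (starRingEnd ℂ) ω) * (1 - ((Real.sqrt (1 - S) : ℝ) : ℂ));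
           -((starRingEnd ℂ) α * ω) * (1 - ((Real.sqrt (1 - S) : ℝ) : ℂ)),
            ((‖ω‖ ^ 2 : ℝ) : ℂ) + ((‖α‖ ^ 2 : ℝ) : ℂ) * ((Real.sqrt (1 - S) : ℝ) : ℂ)]
    N.PosSemidef ∧ N * N = M ∧
      ∀ N' : Matrix (Fin 2) (Fin 2) ℂ, N'.PosSemidef → N' * N' = M → N' = N := by
  set S : ℝ := ‖α‖ ^ 2 + ‖ω‖ ^ 2 with hSdef
  set t : ℝ := Real.sqrt (1 - S) with htdef
  have hwpos : 0 < ‖ω‖ ^ 2 := pow_pos (norm_pos_iff.mpr hω) 2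
  have hSpos : 0 < S := by rw [hSdef]; positivity
  have hS0 : ((S : ℝ) : ℂ) ≠ 0 := by exact_mod_cast hSpos.ne'
  have ht0 : 0 ≤ t := Real.sqrt_nonneg _
  have ht1 : t ≤ 1 := by rw [htdef]; exact Real.sqrt_le_one.mpr (by linarith)
  have ha : ((‖α‖ ^ 2 : ℝ) : ℂ) = α * (starRingEnd ℂ) α := by
    push_cast; rw [← Complex.ofReal_pow, Complex.sq_norm]; exact (Complex.mul_conj α).symm
  have hw : ((‖ω‖ ^ 2 : ℝ) : ℂ) = ω * (starRingEnd ℂ) ω := by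
    push_cast; rw [← Complex.ofReal_pow, Complex.sq_norm]; exact (Complex.mul_conj ω).symm
  have ha' : ((‖α‖ : ℂ)) ^ 2 = α * (starRingEnd ℂ) α := by
    rw [← Complex.ofReal_pow]; exact ha
  have hw' : ((‖ω‖ : ℂ)) ^ 2 = ω * (starRingEnd ℂ) ω := by
    rw [← Complex.ofReal_pow]; exact hw
  have hScast : ((S : ℝ) : ℂ) = α * (starRingEnd ℂ) α + ω * (starRingEnd ℂ) ω := by
    rw [hSdef]; push_cast; rw [← Complex.ofReal_pow, ← Complex.ofReal_pow, Complex.sq_norm,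
      Complex.sq_norm, Complex.mul_conj, Complex.mul_conj]
  have ht2 : ((t : ℝ) : ℂ) ^ 2 = 1 - (α * (starRingEnd ℂ) α + ω * (starRingEnd ℂ) ω) := by
    rw [← Complex.ofReal_pow, htdef, Real.sq_sqrt (by linarith), ← hScast]
    push_cast; ring
  set K : Matrix (Fin 2) (Fin 2) ℂ :=
    !![((‖α‖ ^ 2 : ℝ) : ℂ) + ((‖ω‖ ^ 2 : ℝ) : ℂ) * ((t : ℝ) : ℂ),
        -(α * (starRingEnd ℂ) ω) * (1 - ((t : ℝ) : ℂ));
       -((starRingEnd ℂ) α * ω) * (1 - ((t : ℝ) : ℂ)),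
        ((‖ω‖ ^ 2 : ℝ) : ℂ) + ((‖α‖ ^ 2 : ℝ) : ℂ) * ((t : ℝ) : ℂ)] with hKdef
  have hpsd : (((S : ℝ) : ℂ)⁻¹ • K).PosSemidef := by
    refine Matrix.posSemidef_iff_dotProduct_mulVec.mpr ⟨?_, ?_⟩
    · ext i j
      fin_cases i <;> fin_cases j <;>
        simp [hKdef, Matrix.conjTranspose_apply, _root_.map_mul, map_inv₀, Complex.conj_ofReal,
          _root_.map_add, map_sub, map_neg, _root_.map_one]
    · intro x
      have key : star x ⬝ᵥ ((((S : ℝ) : ℂ)⁻¹ • K) *ᵥ x) =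
          (((S⁻¹ * (t * S * (Complex.normSq (x 0) + Complex.normSq (x 1)) +
            (1 - t) * Complex.normSq ((starRingEnd ℂ) α * x 0 - (starRingEnd ℂ) ω * x 1))) : ℝ) : ℂ) := by
        have hq : ∀ z : ℂ, ((Complex.normSq z : ℝ) : ℂ) = z * (starRingEnd ℂ) z :=
          fun z => (Complex.mul_conj z).symm
        simp only [hKdef, Matrix.smul_mulVec, mulVec, dotProduct, Fin.sum_univ_two,
          Pi.smul_apply, Pi.star_apply, Matrix.smul_apply, Matrix.cons_val', Matrix.cons_val_zero,
          Matrix.cons_val_one, Matrix.head_cons, Matrix.head_fin_const, Matrix.empty_val',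
          Matrix.cons_val_fin_one, Matrix.of_apply, smul_eq_mul, RCLike.star_def]
        push_cast
        rw [hq, hq, hq, ha', hw', hScast]
        simp only [map_sub, _root_.map_mul, Complex.conj_conj, Complex.conj_ofReal]
        have hS0' : α * (starRingEnd ℂ) α + ω * (starRingEnd ℂ) ω ≠ 0 := hScast ▸ hS0
        field_simp
        ring
      rw [key]
      rw [Complex.zero_le_real]
      have h1 : 0 ≤ Complex.normSq (x 0) + Complex.normSq (x 1) :=
        add_nonneg (Complex.normSq_nonneg _) (Complex.normSq_nonneg _)
      have h2 : 0 ≤ Complex.normSq ((starRingEnd ℂ) α * x 0 - (starRingEnd ℂ) ω * x 1) :=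
        Complex.normSq_nonneg _
      exact mul_nonneg (inv_nonneg.2 hSpos.le) (add_nonneg
        (mul_nonneg (mul_nonneg ht0 hSpos.le) h1) (mul_nonneg (by linarith) h2))
  have hKK : K * K = (((S : ℝ) : ℂ) ^ 2) • !![1 - (‖ω‖ : ℂ) ^ 2, -((starRingEnd ℂ) ω * α);
         -((starRingEnd ℂ) α * ω), 1 - (‖α‖ : ℂ) ^ 2] := by
    ext i j
    fin_cases i <;> fin_cases j <;>
      simp only [hKdef, Matrix.mul_apply, Fin.sum_univ_two, Matrix.smul_apply, Matrix.cons_val',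
        Matrix.cons_val_zero, Matrix.cons_val_one, Matrix.head_cons, Matrix.head_fin_const,
        Matrix.empty_val', Matrix.cons_val_fin_one, Matrix.of_apply, smul_eq_mul, Fin.mk_zero,
        Fin.mk_one, Fin.isValue, ha, hw, ha', hw', hScast]
    · linear_combination (ω * (starRingEnd ℂ) ω *
        (α * (starRingEnd ℂ) α + ω * (starRingEnd ℂ) ω)) * ht2
    · linear_combination (α * (starRingEnd ℂ) ω *
        (α * (starRingEnd ℂ) α + ω * (starRingEnd ℂ) ω)) * ht2
    · linear_combination ((starRingEnd ℂ) α * ω *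
        (α * (starRingEnd ℂ) α + ω * (starRingEnd ℂ) ω)) * ht2
    · linear_combination (α * (starRingEnd ℂ) α *
        (α * (starRingEnd ℂ) α + ω * (starRingEnd ℂ) ω)) * ht2
  have hNN : (((S : ℝ) : ℂ)⁻¹ • K) * (((S : ℝ) : ℂ)⁻¹ • K) =
      !![1 - (‖ω‖ : ℂ) ^ 2, -((starRingEnd ℂ) ω * α);
         -((starRingEnd ℂ) α * ω), 1 - (‖α‖ : ℂ) ^ 2] := by
    have e1 : ((((S : ℝ) : ℂ))⁻¹ • K) * ((((S : ℝ) : ℂ))⁻¹ • K) =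
        ((((S : ℝ) : ℂ))⁻¹ * (((S : ℝ) : ℂ))⁻¹) • (K * K) := by
      rw [Matrix.smul_mul, Matrix.mul_smul, smul_smul]
    rw [e1, hKK, smul_smul,
      show (((S : ℝ) : ℂ))⁻¹ * (((S : ℝ) : ℂ))⁻¹ * (((S : ℝ) : ℂ)) ^ 2 = 1 by
        field_simp, one_smul]
  refine ⟨hpsd, hNN, fun N' h1 h2 => open scoped MatrixOrder in (CFC.sq_eq_sq_iff N' _ (Matrix.nonneg_iff_posSemidef.mpr h1) (Matrix.nonneg_iff_posSemidef.mpr hpsd)).mp ?_⟩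
  rw [pow_two, pow_two, h2, hNN]
end

section
/- Let ω ∈ ℂ with |ω| < 1, let n ≥ 1, and let T be an n×n complex matrix such that I − ω̄T is invertible. Then T is a contraction (‖T‖ ≤ 1 for the Euclidean operator norm on ℂⁿ) if and only if M_ω(T) = (ωI − T)(I − ω̄T)^{-1} is a contraction. -/
open Complex Matrix

/-- The Möbius transformation of a square complex matrix:
`M_ω(T) = (ωI − T)(I − ω̄T)⁻¹`. -/
noncomputable def mobius {n : ℕ} (ω : ℂ) (T : Matrix (Fin n) (Fin n) ℂ) :
    Matrix (Fin n) (Fin n) ℂ :=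
  (ω • (1 : Matrix (Fin n) (Fin n) ℂ) - T) *
    ((1 : Matrix (Fin n) (Fin n) ℂ) - (starRingEnd ℂ) ω • T)⁻¹

lemma key_identity {n : ℕ} (ω : ℂ)
    (f : EuclideanSpace ℂ (Fin n) →L[ℂ] EuclideanSpace ℂ (Fin n))
    (y : EuclideanSpace ℂ (Fin n)) :
    ‖y - (starRingEnd ℂ) ω • f y‖ ^ 2 - ‖ω • y - f y‖ ^ 2
      = (1 - ‖ω‖ ^ 2) * (‖y‖ ^ 2 - ‖f y‖ ^ 2) := by
  have h1 := @norm_sub_sq ℂ _ _ _ _ y ((starRingEnd ℂ) ω • f y)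
  have h2 := @norm_sub_sq ℂ _ _ _ _ (ω • y) (f y)
  rw [inner_smul_right] at h1
  rw [inner_smul_left] at h2
  rw [norm_smul] at h1 h2
  simp only [RCLike.norm_conj] at h1
  rw [h1, h2]
  ring

set_option maxHeartbeats 1000000 in
theorem contraction_iff_mobius_contraction
    (n : ℕ) (hn : 1 ≤ n) (ω : ℂ) (hω : ‖ω‖ < 1)
    (T : Matrix (Fin n) (Fin n) ℂ)
    (hT : IsUnit ((1 : Matrix (Fin n) (Fin n) ℂ) - (starRingEnd ℂ) ω • T)) :
    IsContraction T ↔ IsContraction (mobius ω T) := by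
  set A : Matrix (Fin n) (Fin n) ℂ :=
    (1 : Matrix (Fin n) (Fin n) ℂ) - (starRingEnd ℂ) ω • T with hA
  have hdet : IsUnit A.det := (Matrix.isUnit_iff_isUnit_det A).mp hT
  have hAB : A * A⁻¹ = 1 := Matrix.mul_nonsing_inv A hdet
  have hBA : A⁻¹ * A = 1 := Matrix.nonsing_inv_mul A hdet
  set f := Matrix.toEuclideanCLM (𝕜 := ℂ) T with hf
  set a := Matrix.toEuclideanCLM (𝕜 := ℂ) A with ha
  set b := Matrix.toEuclideanCLM (𝕜 := ℂ) A⁻¹ with hb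
  have hab : ∀ x, a (b x) = x := by
    intro x
    have h : a * b = 1 := by rw [ha, hb, ← _root_.map_mul, hAB, _root_.map_one]
    have := congrArg (fun g : EuclideanSpace ℂ (Fin n) →L[ℂ] EuclideanSpace ℂ (Fin n) => g x) h
    simpa [ContinuousLinearMap.mul_apply] using this
  have hba : ∀ x, b (a x) = x := by
    intro x
    have h : b * a = 1 := by rw [ha, hb, ← _root_.map_mul, hBA, _root_.map_one]
    have := congrArg (fun g : EuclideanSpace ℂ (Fin n) →L[ℂ] EuclideanSpace ℂ (Fin n) => g x) h
    simpa [ContinuousLinearMap.mul_apply] using this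
  have haApp : ∀ y, a y = y - (starRingEnd ℂ) ω • f y := by
    intro y
    rw [ha, hA, map_sub, _root_.map_one, _root_.map_smul]
    simp [hf]
  have hM : ∀ x, Matrix.toEuclideanCLM (𝕜 := ℂ) (mobius ω T) x = ω • b x - f (b x) := by
    intro x
    rw [mobius, _root_.map_mul, map_sub, _root_.map_smul, _root_.map_one]
    simp [ContinuousLinearMap.mul_apply, hb, hf]
    rfl
  have norm_le_iff : ∀ g : EuclideanSpace ℂ (Fin n) →L[ℂ] EuclideanSpace ℂ (Fin n),
      ‖g‖ ≤ 1 ↔ ∀ x, ‖g x‖ ≤ ‖x‖ := by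
    intro g
    constructor
    · exact fun h x => (g.le_opNorm x).trans (mul_le_of_le_one_left (norm_nonneg x) h)
    · exact fun h => g.opNorm_le_bound zero_le_one (by simpa using h)
  have hc : 0 < 1 - ‖ω‖ ^ 2 := by
    have : ‖ω‖ < 1 := hω
    nlinarith [norm_nonneg ω]
  rw [IsContraction, IsContraction, norm_le_iff, norm_le_iff]
  constructor
  · intro h x
    have key := key_identity ω f (b x)
    have hx : x = b x - (starRingEnd ℂ) ω • f (b x) := by rw [← haApp, hab]
    have hfy : ‖f (b x)‖ ≤ ‖b x‖ := h (b x)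
    rw [hM x]
    rw [← hx] at key
    nlinarith [norm_nonneg x, norm_nonneg (ω • b x - f (b x)), hc.le,
      mul_self_le_mul_self (norm_nonneg (f (b x))) hfy]
  · intro h y
    have key := key_identity ω f y
    have hMx := hM (a y)
    rw [hba] at hMx
    have hx := h (a y)
    rw [hMx, haApp] at hx
    have h1 : 0 ≤ (1 - ‖ω‖ ^ 2) * (‖y‖ ^ 2 - ‖f y‖ ^ 2) := by
      nlinarith [mul_self_le_mul_self (norm_nonneg (ω • y - f y)) hx]
    have h2 : 0 ≤ ‖y‖ ^ 2 - ‖f y‖ ^ 2 := nonneg_of_mul_nonneg_right h1 hc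
    rw [← hf]
    nlinarith [norm_nonneg y, norm_nonneg (f y)]
end

section
/- (Column version of Parrott's theorem.) Let H, K₁, K₂ be complex Hilbert spaces and let A : H → K₁ and C : H → K₂ be bounded operators. Then the column operator [A; C] : H → K₁ ⊕ K₂ is a contraction if and only if C is a contraction and there exists a contraction Z : H → K₁ such that A = Z·D_C, where D_C = (I − C*C)^{1/2}. -/
open ContinuousLinearMap

/-- The column operator `[A; C] : H → K₁ ⊕ K₂`, where the direct sum carries the `ℓ²` norm. -/
noncomputable def columnOp {H K₁ K₂ : Type*}
    [NormedAddCommGroup H] [InnerProductSpace ℂ H]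
    [NormedAddCommGroup K₁] [InnerProductSpace ℂ K₁]
    [NormedAddCommGroup K₂] [InnerProductSpace ℂ K₂]
    (A : H →L[ℂ] K₁) (C : H →L[ℂ] K₂) : H →L[ℂ] WithLp 2 (K₁ × K₂) :=
  ((WithLp.prodContinuousLinearEquiv 2 ℂ K₁ K₂).symm : (K₁ × K₂) →L[ℂ] WithLp 2 (K₁ × K₂)) ∘L
    (A.prod C)

lemma exists_contraction_factor {H K₁ : Type*}
    [NormedAddCommGroup H] [InnerProductSpace ℂ H] [CompleteSpace H]
    [NormedAddCommGroup K₁] [InnerProductSpace ℂ K₁] [CompleteSpace K₁]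
    (A : H →L[ℂ] K₁) (D : H →L[ℂ] H) (key : ∀ x, ‖A x‖ ≤ ‖D x‖) :
    ∃ Z : H →L[ℂ] K₁, ‖Z‖ ≤ 1 ∧ A = Z ∘L D := by
  have hAeq : ∀ x y : H, D x = D y → A x = A y := by
    intro x y h
    have : ‖A x - A y‖ ≤ ‖D x - D y‖ := by
      simpa [map_sub] using key (x - y)
    rw [h, sub_self, norm_zero] at this
    exact sub_eq_zero.mp (norm_le_zero_iff.mp this)
  set M : Submodule ℂ H := LinearMap.range (D : H →ₗ[ℂ] H) with hM
  have memM : ∀ x : H, D x ∈ M := fun x => ⟨x, rfl⟩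
  -- the map on the range
  let g : M → K₁ := fun y => A y.2.choose
  have hg : ∀ (y : M) (x : H), D x = (y : H) → g y = A x := by
    intro y x h
    exact hAeq _ _ (y.2.choose_spec.trans h.symm)
  let f₀ : M →ₗ[ℂ] K₁ :=
    { toFun := g
      map_add' := by
        rintro ⟨a, x, rfl⟩ ⟨b, y, rfl⟩
        have h1 : g ⟨D x, memM x⟩ = A x := hg _ _ rfl
        have h2 : g ⟨D y, memM y⟩ = A y := hg _ _ rfl
        have h3 : g (⟨D x, memM x⟩ + ⟨D y, memM y⟩) = A (x + y) := by
          apply hg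
          simp [map_add]
        simp [h1, h2, h3, map_add]
        exact h3.trans (map_add A x y)
      map_smul' := by
        rintro c ⟨a, x, rfl⟩
        have h1 : g ⟨D x, memM x⟩ = A x := hg _ _ rfl
        have h3 : g (c • ⟨D x, memM x⟩) = A (c • x) := by
          apply hg
          simp
        simp [h1, h3]
        exact h3.trans (map_smul A c x) }
  have hf₀ : ∀ y : M, ‖f₀ y‖ ≤ 1 * ‖y‖ := by
    rintro ⟨a, x, rfl⟩
    have h1 : g ⟨(D : H →ₗ[ℂ] H) x, ⟨x, rfl⟩⟩ = A x := hg _ _ rfl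
    rw [one_mul]
    calc ‖f₀ ⟨(D : H →ₗ[ℂ] H) x, ⟨x, rfl⟩⟩‖ = ‖A x‖ := by rw [show f₀ ⟨(D : H →ₗ[ℂ] H) x, ⟨x, rfl⟩⟩ = g ⟨(D : H →ₗ[ℂ] H) x, ⟨x, rfl⟩⟩ from rfl, h1]
      _ ≤ ‖D x‖ := key x
      _ = ‖(⟨(D : H →ₗ[ℂ] H) x, ⟨x, rfl⟩⟩ : M)‖ := rfl
  let f : M →L[ℂ] K₁ := f₀.mkContinuous 1 hf₀
  have hfnorm : ‖f‖ ≤ 1 := f₀.mkContinuous_norm_le zero_le_one hf₀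
  set Mc := M.topologicalClosure with hMc
  -- inclusion
  let e₀ : M →ₗ[ℂ] Mc := Submodule.inclusion M.le_topologicalClosure
  have he₀ : ∀ y : M, ‖e₀ y‖ = ‖y‖ := fun y => rfl
  let e : M →L[ℂ] Mc := e₀.mkContinuous 1 (fun y => by rw [he₀, one_mul])
  have h_bound : ∀ y : M, ‖y‖ ≤ (1 : NNReal) * ‖e y‖ := fun y => by
    rw [show ‖e y‖ = ‖y‖ from rfl]; simp
  have hrange : Set.range e = ((Subtype.val : Mc → H) ⁻¹' (M : Set H)) := by
    ext y
    constructor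
    · rintro ⟨w, rfl⟩; exact w.2
    · intro hy; exact ⟨⟨(y : H), hy⟩, rfl⟩
  have himg : (Subtype.val '' ((Subtype.val : Mc → H) ⁻¹' (M : Set H))) = (M : Set H) := by
    ext z
    constructor
    · rintro ⟨w, hw, rfl⟩; exact hw
    · intro hz; exact ⟨⟨z, M.le_topologicalClosure hz⟩, hz, rfl⟩
  have h_dense : DenseRange e := by
    rw [DenseRange, hrange]
    intro y
    rw [closure_subtype, himg]
    exact y.2
  let gext : Mc →L[ℂ] K₁ :=
    f.extend e
  have hgext_norm : ‖gext‖ ≤ 1 := by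
    have := f.opNorm_extend_le h_dense h_bound
    calc ‖gext‖ ≤ (1 : NNReal) * ‖f‖ := this
      _ ≤ 1 := by simpa using hfnorm
  have hgext_eq : ∀ y : M, gext (e y) = f y := fun y => f.extend_eq h_dense (isUniformEmbedding_of_bound e h_bound).isUniformInducing y
  haveI : CompleteSpace Mc := M.isClosed_topologicalClosure.completeSpace_coe
  let P : H →L[ℂ] Mc := Submodule.orthogonalProjectionOnto Mc
  refine ⟨gext ∘L P, ?_, ?_⟩
  · calc ‖gext ∘L P‖ ≤ ‖gext‖ * ‖P‖ := opNorm_comp_le _ _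
      _ ≤ 1 * 1 :=
        mul_le_mul hgext_norm (Submodule.orthogonalProjectionOnto_norm_le (K := Mc)) (norm_nonneg P)
          zero_le_one
      _ = 1 := one_mul 1
  · ext x
    have hmem : D x ∈ Mc := M.le_topologicalClosure (memM x)
    have hP : P (D x) = ⟨D x, hmem⟩ :=
      Submodule.orthogonalProjectionOnto_mem_subspace_eq_self (⟨D x, hmem⟩ : Mc)
    have hPe : (⟨D x, hmem⟩ : Mc) = e ⟨D x, memM x⟩ := rfl
    have : (gext ∘L P) (D x) = A x := by
      rw [ContinuousLinearMap.comp_apply, hP, hPe, hgext_eq]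
      exact hg _ _ rfl
    simpa using this.symm


theorem parrott_column
    {H K₁ K₂ : Type*}
    [NormedAddCommGroup H] [InnerProductSpace ℂ H] [CompleteSpace H]
    [NormedAddCommGroup K₁] [InnerProductSpace ℂ K₁] [CompleteSpace K₁]
    [NormedAddCommGroup K₂] [InnerProductSpace ℂ K₂] [CompleteSpace K₂]
    (A : H →L[ℂ] K₁) (C : H →L[ℂ] K₂)
    -- `DC` is the defect operator `D_C = (I - C*C)^{1/2}`, i.e. the unique positive
    -- semidefinite square root of `I - C*C`:
    (DC : H →L[ℂ] H) (hDC_pos : DC.IsPositive)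
    (hDC_sq : DC ∘L DC = 1 - (ContinuousLinearMap.adjoint C) ∘L C) :
    ‖columnOp A C‖ ≤ 1 ↔
      (‖C‖ ≤ 1 ∧ ∃ Z : H →L[ℂ] K₁, ‖Z‖ ≤ 1 ∧ A = Z ∘L DC) := by
  -- the norm of the column operator pointwise
  have hcol : ∀ x : H, ‖columnOp A C x‖ ^ 2 = ‖A x‖ ^ 2 + ‖C x‖ ^ 2 := by
    intro x
    rw [show columnOp A C x =
      (WithLp.prodContinuousLinearEquiv 2 ℂ K₁ K₂).symm (A x, C x) from rfl]
    rw [WithLp.prod_norm_sq_eq_of_L2]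
    rfl
  -- characterization of contractivity of the column
  have hchar : ‖columnOp A C‖ ≤ 1 ↔ ∀ x : H, ‖A x‖ ^ 2 + ‖C x‖ ^ 2 ≤ ‖x‖ ^ 2 := by
    rw [opNorm_le_iff zero_le_one]
    constructor
    · intro h x
      rw [← hcol x]
      have := h x
      rw [one_mul] at this
      exact pow_le_pow_left₀ (norm_nonneg _) this 2
    · intro h x
      rw [one_mul]
      have h2 : ‖columnOp A C x‖ ^ 2 ≤ ‖x‖ ^ 2 := by rw [hcol x]; exact h x
      exact le_of_pow_le_pow_left₀ (by norm_num) (norm_nonneg _) h2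
  -- the defect identity
  have hD : ∀ x : H, ‖DC x‖ ^ 2 = ‖x‖ ^ 2 - ‖C x‖ ^ 2 := by
    intro x
    have hsa : ContinuousLinearMap.adjoint DC = DC := hDC_pos.isSelfAdjoint.adjoint_eq
    have h1 : (inner ℂ (DC x) (DC x) : ℂ) = inner ℂ x ((DC ∘L DC) x) := by
      calc (inner ℂ (DC x) (DC x) : ℂ)
          = inner ℂ ((ContinuousLinearMap.adjoint DC) x) (DC x) := by rw [hsa]
        _ = inner ℂ x (DC (DC x)) := ContinuousLinearMap.adjoint_inner_left _ _ _
        _ = inner ℂ x ((DC ∘L DC) x) := rfl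
    have h2 : (inner ℂ x ((DC ∘L DC) x) : ℂ) = inner ℂ x x - inner ℂ (C x) (C x) := by
      rw [hDC_sq]
      simp only [ContinuousLinearMap.sub_apply, ContinuousLinearMap.one_apply,
        ContinuousLinearMap.comp_apply, inner_sub_right]
      rw [ContinuousLinearMap.adjoint_inner_right]
    have key : ‖DC x‖ ^ 2 = RCLike.re (inner ℂ x x - inner ℂ (C x) (C x) : ℂ) := by
      rw [norm_sq_eq_re_inner (𝕜 := ℂ), h1, h2]
    rw [map_sub, ← norm_sq_eq_re_inner (𝕜 := ℂ), ← norm_sq_eq_re_inner (𝕜 := ℂ)] at key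
    exact key
  constructor
  · intro h
    have hb := hchar.mp h
    have hC : ‖C‖ ≤ 1 := by
      rw [opNorm_le_iff zero_le_one]
      intro x
      rw [one_mul]
      refine le_of_pow_le_pow_left₀ (n := 2) (by norm_num) (norm_nonneg _) ?_
      nlinarith [hb x, sq_nonneg ‖A x‖]
    refine ⟨hC, exists_contraction_factor A DC ?_⟩
    intro x
    refine le_of_pow_le_pow_left₀ (n := 2) (by norm_num) (norm_nonneg _) ?_
    rw [hD x]
    nlinarith [hb x]
  · rintro ⟨hC, Z, hZ, rfl⟩
    rw [hchar]
    intro x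
    have hA : ‖(Z ∘L DC) x‖ ≤ ‖DC x‖ := by
      calc ‖(Z ∘L DC) x‖ = ‖Z (DC x)‖ := rfl
        _ ≤ ‖Z‖ * ‖DC x‖ := le_opNorm Z (DC x)
        _ ≤ 1 * ‖DC x‖ := mul_le_mul_of_nonneg_right hZ (norm_nonneg _)
        _ = ‖DC x‖ := one_mul _
    have := pow_le_pow_left₀ (norm_nonneg _) hA 2
    rw [hD x] at this
    linarith
end
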